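/- Let p be an integer. Let H'_p be the presented group on three generators a, b, c with relators (writing d := b a b⁻¹ and [x, y] := x y x⁻¹ y⁻¹) r₁ = d a d [c, d] a⁻¹ [c, d] b⁻¹, r₂ = c d c² b a⁻¹ b⁻¹ c⁻¹ a [d, c] [b, a⁻¹] a [a⁻¹, b] [c, d] a⁻¹ [c, d] c⁻¹ [d, c] a [d, c] [b, a⁻¹] a⁻¹ [a⁻¹, b] [c, d] a⁻¹ [c, d] c⁻¹, and the additional relator c⁻¹ · ([b, a⁻¹][b⁻¹, a])^p. Let K'_p be the presented group on two generators x, z with the single relator x z x z⁻¹ [y, z x z⁻¹] · ( z x⁻¹ [z x z⁻¹, y] x )⁻¹, where y abbreviates the word ([z, x⁻¹][z⁻¹, x])^p. Then the group homomorphism H'_p → K'_p determined by a ↦ x, b ↦ z, c ↦ ([z, x⁻¹][z⁻¹, x])^p is well defined and is an isomorphism. -/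

import Mathlib

set_option maxRecDepth 20000
set_option maxHeartbeats 4000000

namespace Stmt15

open scoped commutatorElement

/-- The relators of the presented group `H'_p` on the three generators
`a, b, c` (encoded as `0, 1, 2 : Fin 3`), written with `d := b a b⁻¹` and
commutators `⁅x, y⁆ = x y x⁻¹ y⁻¹`: the two relators `r₁, r₂` together with
the additional relator `c⁻¹ · ([b,a⁻¹][b⁻¹,a])^p`. -/
def relsH (p : ℤ) : Set (FreeGroup (Fin 3)) :=
  let a : FreeGroup (Fin 3) := FreeGroup.of 0
  let b : FreeGroup (Fin 3) := FreeGroup.of 1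
  let c : FreeGroup (Fin 3) := FreeGroup.of 2
  let d : FreeGroup (Fin 3) := b * a * b⁻¹
  { d * a * d * ⁅c, d⁆ * a⁻¹ * ⁅c, d⁆ * b⁻¹,
    c * d * c ^ 2 * b * a⁻¹ * b⁻¹ * c⁻¹ * a * ⁅d, c⁆ * ⁅b, a⁻¹⁆ * a * ⁅a⁻¹, b⁆ *
      ⁅c, d⁆ * a⁻¹ * ⁅c, d⁆ * c⁻¹ * ⁅d, c⁆ * a * ⁅d, c⁆ * ⁅b, a⁻¹⁆ * a⁻¹ * ⁅a⁻¹, b⁆ *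
      ⁅c, d⁆ * a⁻¹ * ⁅c, d⁆ * c⁻¹,
    c⁻¹ * (⁅b, a⁻¹⁆ * ⁅b⁻¹, a⁆) ^ p }

/-- The single relator of the presented group `K'_p` on the two generators
`x, z` (encoded as `0, 1 : Fin 2`), where `y` abbreviates
`([z,x⁻¹][z⁻¹,x])^p`. -/
def relsK (p : ℤ) : Set (FreeGroup (Fin 2)) :=
  let x : FreeGroup (Fin 2) := FreeGroup.of 0
  let z : FreeGroup (Fin 2) := FreeGroup.of 1
  let y : FreeGroup (Fin 2) := (⁅z, x⁻¹⁆ * ⁅z⁻¹, x⁆) ^ p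
  { x * z * x * z⁻¹ * ⁅y, z * x * z⁻¹⁆ * (z * x⁻¹ * ⁅z * x * z⁻¹, y⁆ * x)⁻¹ }

section AuxGroup

variable {G : Type*} [Group G]

/-- From the single relation of `K`, the image of `r₁` is trivial (for any `y`). -/
lemma aux_r1 (x z y : G)
    (h : x*z*x*z⁻¹*(y*(z*x*z⁻¹)*y⁻¹*(z*x*z⁻¹)⁻¹)*(z*x⁻¹*((z*x*z⁻¹)*y*(z*x*z⁻¹)⁻¹*y⁻¹)*x)⁻¹ = 1) :
    (z*x*z⁻¹)*x*(z*x*z⁻¹)*(y*(z*x*z⁻¹)*y⁻¹*(z*x*z⁻¹)⁻¹)*x⁻¹*(y*(z*x*z⁻¹)*y⁻¹*(z*x*z⁻¹)⁻¹)*z⁻¹ = 1 := by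
  have e : (z*x*z⁻¹)*x*(z*x*z⁻¹)*(y*(z*x*z⁻¹)*y⁻¹*(z*x*z⁻¹)⁻¹)*x⁻¹*(y*(z*x*z⁻¹)*y⁻¹*(z*x*z⁻¹)⁻¹)*z⁻¹
      = (z*x*z⁻¹) * (x*z*x*z⁻¹*(y*(z*x*z⁻¹)*y⁻¹*(z*x*z⁻¹)⁻¹)*(z*x⁻¹*((z*x*z⁻¹)*y*(z*x*z⁻¹)⁻¹*y⁻¹)*x)⁻¹) * (z*x*z⁻¹)⁻¹ := by
    group
  rw [e, h]
  group

/-- From the single relation of `K`, the image of `r₂` is trivial, where `y` is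
`([z,x⁻¹][z⁻¹,x])^p`. -/
lemma aux_r2 (p : ℤ) (x z y : G)
    (hy : y = ((z*x⁻¹*z⁻¹*x)*(z⁻¹*x*z*x⁻¹))^p)
    (h : x*z*x*z⁻¹*(y*(z*x*z⁻¹)*y⁻¹*(z*x*z⁻¹)⁻¹)*(z*x⁻¹*((z*x*z⁻¹)*y*(z*x*z⁻¹)⁻¹*y⁻¹)*x)⁻¹ = 1) :
    y*(z*x*z⁻¹)*y^2*z*x⁻¹*z⁻¹*y⁻¹*x*((z*x*z⁻¹)*y*(z*x*z⁻¹)⁻¹*y⁻¹)*(z*x⁻¹*z⁻¹*x)*x*(x⁻¹*z*x*z⁻¹)*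
      (y*(z*x*z⁻¹)*y⁻¹*(z*x*z⁻¹)⁻¹)*x⁻¹*(y*(z*x*z⁻¹)*y⁻¹*(z*x*z⁻¹)⁻¹)*y⁻¹*
      ((z*x*z⁻¹)*y*(z*x*z⁻¹)⁻¹*y⁻¹)*x*((z*x*z⁻¹)*y*(z*x*z⁻¹)⁻¹*y⁻¹)*(z*x⁻¹*z⁻¹*x)*x⁻¹*(x⁻¹*z*x*z⁻¹)*
      (y*(z*x*z⁻¹)*y⁻¹*(z*x*z⁻¹)⁻¹)*x⁻¹*(y*(z*x*z⁻¹)*y⁻¹*(z*x*z⁻¹)⁻¹)*y⁻¹ = 1 := by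
  have hc : y * ((z*x⁻¹*z⁻¹*x)*(z⁻¹*x*z*x⁻¹)) = ((z*x⁻¹*z⁻¹*x)*(z⁻¹*x*z*x⁻¹)) * y := by
    rw [hy]
    exact ((Commute.refl ((z*x⁻¹*z⁻¹*x)*(z⁻¹*x*z*x⁻¹))).zpow_left p).eq
  have hV : y*(z*x*z⁻¹)*y*(z*x⁻¹*z⁻¹*x*z⁻¹*x*z*x⁻¹)*y⁻¹*(x*z⁻¹*x⁻¹*z*x⁻¹)*y⁻¹ = 1 := by
    have e1 : y*(z*x*z⁻¹)*y*(z*x⁻¹*z⁻¹*x*z⁻¹*x*z*x⁻¹)*y⁻¹*(x*z⁻¹*x⁻¹*z*x⁻¹)*y⁻¹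
        = y*(z*x*z⁻¹)*(y*((z*x⁻¹*z⁻¹*x)*(z⁻¹*x*z*x⁻¹)))*y⁻¹*(x*z⁻¹*x⁻¹*z*x⁻¹)*y⁻¹ := by
      group
    rw [e1, hc]
    group
  have key : y*(z*x*z⁻¹)*y^2*z*x⁻¹*z⁻¹*y⁻¹*x*((z*x*z⁻¹)*y*(z*x*z⁻¹)⁻¹*y⁻¹)*(z*x⁻¹*z⁻¹*x)*x*(x⁻¹*z*x*z⁻¹)*
      (y*(z*x*z⁻¹)*y⁻¹*(z*x*z⁻¹)⁻¹)*x⁻¹*(y*(z*x*z⁻¹)*y⁻¹*(z*x*z⁻¹)⁻¹)*y⁻¹*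
      ((z*x*z⁻¹)*y*(z*x*z⁻¹)⁻¹*y⁻¹)*x*((z*x*z⁻¹)*y*(z*x*z⁻¹)⁻¹*y⁻¹)*(z*x⁻¹*z⁻¹*x)*x⁻¹*(x⁻¹*z*x*z⁻¹)*
      (y*(z*x*z⁻¹)*y⁻¹*(z*x*z⁻¹)⁻¹)*x⁻¹*(y*(z*x*z⁻¹)*y⁻¹*(z*x*z⁻¹)⁻¹)*y⁻¹
      = (y*z*x*z⁻¹*y*y*z*x⁻¹*z⁻¹*y⁻¹*x*z*x*z⁻¹*y*z*x⁻¹*z⁻¹*y⁻¹*z*x⁻¹*z⁻¹*x*z*x*z⁻¹*y*z*x*z⁻¹*y⁻¹*z*x⁻¹*z⁻¹*x⁻¹*y*z*x*z⁻¹*y⁻¹*z*x⁻¹*z⁻¹*y⁻¹*x*z⁻¹) * (x*z*x*z⁻¹*(y*(z*x*z⁻¹)*y⁻¹*(z*x*z⁻¹)⁻¹)*(z*x⁻¹*((z*x*z⁻¹)*y*(z*x*z⁻¹)⁻¹*y⁻¹)*x)⁻¹)⁻¹ * (y*z*x*z⁻¹*y*y*z*x⁻¹*z⁻¹*y⁻¹*x*z*x*z⁻¹*y*z*x⁻¹*z⁻¹*y⁻¹*z*x⁻¹*z⁻¹*x*z*x*z⁻¹*y*z*x*z⁻¹*y⁻¹*z*x⁻¹*z⁻¹*x⁻¹*y*z*x*z⁻¹*y⁻¹*z*x⁻¹*z⁻¹*y⁻¹*x*z⁻¹)⁻¹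 *
        (y*z*x*z⁻¹*y*y*z*x⁻¹*z⁻¹*y⁻¹*x*z*x*z⁻¹*y*z*x⁻¹*z⁻¹*y⁻¹*z*x⁻¹*z⁻¹) * (x*z*x*z⁻¹*(y*(z*x*z⁻¹)*y⁻¹*(z*x*z⁻¹)⁻¹)*(z*x⁻¹*((z*x*z⁻¹)*y*(z*x*z⁻¹)⁻¹*y⁻¹)*x)⁻¹) * (y*z*x*z⁻¹*y*y*z*x⁻¹*z⁻¹*y⁻¹*x*z*x*z⁻¹*y*z*x⁻¹*z⁻¹*y⁻¹*z*x⁻¹*z⁻¹)⁻¹ *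
        (y*z*x*z⁻¹*y*y*z*x⁻¹*z⁻¹*y⁻¹*x*z*x*z⁻¹*y*z*x⁻¹*z⁻¹*y⁻¹*z*x⁻¹*x⁻¹*y⁻¹*x*z⁻¹*x⁻¹) * (x*z*x*z⁻¹*(y*(z*x*z⁻¹)*y⁻¹*(z*x*z⁻¹)⁻¹)*(z*x⁻¹*((z*x*z⁻¹)*y*(z*x*z⁻¹)⁻¹*y⁻¹)*x)⁻¹) * (y*z*x*z⁻¹*y*y*z*x⁻¹*z⁻¹*y⁻¹*x*z*x*z⁻¹*y*z*x⁻¹*z⁻¹*y⁻¹*z*x⁻¹*x⁻¹*y⁻¹*x*z⁻¹*x⁻¹)⁻¹ *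
        (y*z*x*z⁻¹*y*z*x⁻¹*z⁻¹*x*z⁻¹) * (x*z*x*z⁻¹*(y*(z*x*z⁻¹)*y⁻¹*(z*x*z⁻¹)⁻¹)*(z*x⁻¹*((z*x*z⁻¹)*y*(z*x*z⁻¹)⁻¹*y⁻¹)*x)⁻¹)⁻¹ * (y*z*x*z⁻¹*y*z*x⁻¹*z⁻¹*x*z⁻¹)⁻¹ *
        (y*(z*x*z⁻¹)*y*(z*x⁻¹*z⁻¹*x*z⁻¹*x*z*x⁻¹)*y⁻¹*(x*z⁻¹*x⁻¹*z*x⁻¹)*y⁻¹) := by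
    group
    norm_num
    group
    try rw [zpow_two]
    try group
  rw [key, h, hV]
  group

/-- From `r₁` of `H`, the image of the relation of `K` is trivial. -/
lemma aux_K (a b c : G)
    (h1 : (b*a*b⁻¹)*a*(b*a*b⁻¹)*(c*(b*a*b⁻¹)*c⁻¹*(b*a*b⁻¹)⁻¹)*a⁻¹*(c*(b*a*b⁻¹)*c⁻¹*(b*a*b⁻¹)⁻¹)*b⁻¹ = 1) :
    a*b*a*b⁻¹*(c*(b*a*b⁻¹)*c⁻¹*(b*a*b⁻¹)⁻¹)*(b*a⁻¹*((b*a*b⁻¹)*c*(b*a*b⁻¹)⁻¹*c⁻¹)*a)⁻¹ = 1 := by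
  have e : a*b*a*b⁻¹*(c*(b*a*b⁻¹)*c⁻¹*(b*a*b⁻¹)⁻¹)*(b*a⁻¹*((b*a*b⁻¹)*c*(b*a*b⁻¹)⁻¹*c⁻¹)*a)⁻¹
      = (b*a*b⁻¹)⁻¹ * ((b*a*b⁻¹)*a*(b*a*b⁻¹)*(c*(b*a*b⁻¹)*c⁻¹*(b*a*b⁻¹)⁻¹)*a⁻¹*(c*(b*a*b⁻¹)*c⁻¹*(b*a*b⁻¹)⁻¹)*b⁻¹) * (b*a*b⁻¹) := by
    group
  rw [e, h1]
  group

end AuxGroup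

lemma mk_of {α : Type*} {rels : Set (FreeGroup α)} (x : α) :
    PresentedGroup.mk rels (FreeGroup.of x) = PresentedGroup.of x := rfl

theorem hom_is_well_defined_and_isomorphism (p : ℤ) :
    ∃ φ : PresentedGroup (relsH p) →* PresentedGroup (relsK p),
      φ (PresentedGroup.of 0) = PresentedGroup.of 0 ∧
      φ (PresentedGroup.of 1) = PresentedGroup.of 1 ∧
      φ (PresentedGroup.of 2) =
        (⁅(PresentedGroup.of 1 : PresentedGroup (relsK p)), (PresentedGroup.of 0)⁻¹⁆ *
          ⁅(PresentedGroup.of 1 : PresentedGroup (relsK p))⁻¹, PresentedGroup.of 0⁆) ^ p ∧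
      Function.Bijective φ := by
  classical
  set X : PresentedGroup (relsK p) := PresentedGroup.of 0 with hX
  set Z : PresentedGroup (relsK p) := PresentedGroup.of 1 with hZ
  set Y : PresentedGroup (relsK p) := (⁅Z, X⁻¹⁆ * ⁅Z⁻¹, X⁆) ^ p with hY
  set A : PresentedGroup (relsH p) := PresentedGroup.of 0 with hA
  set B : PresentedGroup (relsH p) := PresentedGroup.of 1 with hB
  set C : PresentedGroup (relsH p) := PresentedGroup.of 2 with hC
  -- The relation of K, inside K' := PresentedGroup (relsK p)
  have hYw : Y = ((Z*X⁻¹*Z⁻¹*X)*(Z⁻¹*X*Z*X⁻¹))^p := by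
    rw [hY]; simp only [commutatorElement_def, inv_inv]
  have hKmem : ∀ r ∈ relsK p, (PresentedGroup.mk (relsK p)) r = 1 := by
    intro r hr
    exact (QuotientGroup.eq_one_iff _).mpr (Subgroup.subset_normalClosure hr)
  have hK0 := hKmem _ (Set.mem_singleton _)
  simp only [commutatorElement_def, map_mul, map_inv, map_zpow, map_pow, mk_of] at hK0
  rw [← hX, ← hZ] at hK0
  have hK : X*Z*X*Z⁻¹*(Y*(Z*X*Z⁻¹)*Y⁻¹*(Z*X*Z⁻¹)⁻¹)*(Z*X⁻¹*((Z*X*Z⁻¹)*Y*(Z*X*Z⁻¹)⁻¹*Y⁻¹)*X)⁻¹ = 1 := by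
    rw [hYw, ← hK0]
    group
  -- relations of H inside H' := PresentedGroup (relsH p)
  have mkH : ∀ r ∈ relsH p, (PresentedGroup.mk (relsH p)) r = 1 := by
    intro r hr
    exact (QuotientGroup.eq_one_iff _).mpr (Subgroup.subset_normalClosure hr)
  have hH1 : (B*A*B⁻¹)*A*(B*A*B⁻¹)*(C*(B*A*B⁻¹)*C⁻¹*(B*A*B⁻¹)⁻¹)*A⁻¹*(C*(B*A*B⁻¹)*C⁻¹*(B*A*B⁻¹)⁻¹)*B⁻¹ = 1 := by
    have h0 := mkH _ (Set.mem_insert _ _)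
    simp only [commutatorElement_def, map_mul, map_inv, map_zpow, map_pow, mk_of] at h0
    rw [← hA, ← hB, ← hC] at h0
    rw [← h0]
  have hH3 : (⁅B, A⁻¹⁆ * ⁅B⁻¹, A⁆) ^ p = C := by
    have h0 := mkH _ (Set.mem_insert_of_mem _ (Set.mem_insert_of_mem _ (Set.mem_singleton _)))
    simp only [commutatorElement_def, map_mul, map_inv, map_zpow, map_pow, mk_of] at h0
    rw [← hA, ← hB, ← hC] at h0
    have h1 : C⁻¹ * (⁅B, A⁻¹⁆ * ⁅B⁻¹, A⁆) ^ p = 1 := by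
      rw [← h0]
      simp only [commutatorElement_def]
    exact (inv_mul_eq_one.mp h1).symm
  have hH3' : (⁅B, A⁻¹⁆ * ⁅B⁻¹, A⁆) ^ p = ((B*A⁻¹*B⁻¹*A)*(B⁻¹*A*B*A⁻¹))^p := by
    simp only [commutatorElement_def, inv_inv]
  -- the forward homomorphism φ
  have hφrels : ∀ r ∈ relsH p, FreeGroup.lift (![X, Z, Y] : Fin 3 → PresentedGroup (relsK p)) r = 1 := by
    intro r hr
    simp only [relsH, Set.mem_insert_iff, Set.mem_singleton_iff] at hr
    rcases hr with rfl | rfl | rfl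
    · have h1 := aux_r1 X Z Y hK
      simp only [commutatorElement_def, map_mul, map_inv, map_zpow, map_pow, FreeGroup.lift_apply_of,
        Matrix.cons_val_zero, Matrix.cons_val_one, Matrix.head_cons, Matrix.cons_val_two,
        Matrix.tail_cons]
      rw [← h1]
    · have h2 := aux_r2 p X Z Y hYw hK
      simp only [commutatorElement_def, map_mul, map_inv, map_zpow, map_pow, FreeGroup.lift_apply_of,
        Matrix.cons_val_zero, Matrix.cons_val_one, Matrix.head_cons, Matrix.cons_val_two,
        Matrix.tail_cons]
      rw [← h2]
      group
      try norm_num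
      try group
      try rw [zpow_two]
      try group
    · simp only [commutatorElement_def, map_mul, map_inv, map_zpow, map_pow, FreeGroup.lift_apply_of,
        Matrix.cons_val_zero, Matrix.cons_val_one, Matrix.head_cons, Matrix.cons_val_two,
        Matrix.tail_cons]
      rw [hYw]
      group
  have hψrels : ∀ r ∈ relsK p, FreeGroup.lift (![A, B] : Fin 2 → PresentedGroup (relsH p)) r = 1 := by
    intro r hr
    simp only [relsK, Set.mem_singleton_iff] at hr
    subst hr
    have h1 := aux_K A B C hH1
    rw [hH3'] at hH3
    rw [← hH3] at h1
    simp only [commutatorElement_def, map_mul, map_inv, map_zpow, map_pow, FreeGroup.lift_apply_of,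
      Matrix.cons_val_zero, Matrix.cons_val_one, Matrix.head_cons]
    rw [← h1]
    group
    try norm_num
    try group
    try rw [zpow_two]
    try group
  set φ : PresentedGroup (relsH p) →* PresentedGroup (relsK p) := PresentedGroup.toGroup hφrels with hφ
  set ψ : PresentedGroup (relsK p) →* PresentedGroup (relsH p) := PresentedGroup.toGroup hψrels with hψ
  have hφ0 : φ A = X := PresentedGroup.toGroup.of hφrels
  have hφ1 : φ B = Z := PresentedGroup.toGroup.of hφrels
  have hφ2 : φ C = Y := PresentedGroup.toGroup.of hφrels
  have hψ0 : ψ X = A := PresentedGroup.toGroup.of hψrels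
  have hψ1 : ψ Z = B := PresentedGroup.toGroup.of hψrels
  have l1 : ψ.comp φ = MonoidHom.id _ := by
    apply PresentedGroup.ext
    intro i
    fin_cases i
    · show ψ (φ A) = A
      rw [hφ0, hψ0]
    · show ψ (φ B) = B
      rw [hφ1, hψ1]
    · show ψ (φ C) = C
      rw [hφ2, hYw]
      simp only [map_zpow, map_mul, map_inv, hψ0, hψ1]
      rw [← (by simp only [commutatorElement_def, inv_inv] :
          (⁅B, A⁻¹⁆ * ⁅B⁻¹, A⁆ : PresentedGroup (relsH p)) = (B*A⁻¹*B⁻¹*A)*(B⁻¹*A*B*A⁻¹))]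
      exact hH3
  have l2 : φ.comp ψ = MonoidHom.id _ := by
    apply PresentedGroup.ext
    intro i
    fin_cases i
    · show φ (ψ X) = X
      rw [hψ0, hφ0]
    · show φ (ψ Z) = Z
      rw [hψ1, hφ1]
  refine ⟨φ, hφ0, hφ1, hφ2, ?_⟩
  refine Function.bijective_iff_has_inverse.mpr ⟨ψ, ?_, ?_⟩
  · intro g
    exact DFunLike.congr_fun l1 g
  · intro g
    exact DFunLike.congr_fun l2 g

end Stmt15
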